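/- arXiv:math/0610706 — 3 statements merged into one kernel-verified Lean document; each statement's English description precedes it below -/
import Mathlib

section
/- Let h and g be analytic on 𝔻 and suppose f = h + conj∘g is sense-preserving and locally univalent on 𝔻 (i.e. |g′(z)| < |h′(z)| for all z ∈ 𝔻). Then for β ∈ ℝ, f is injective on 𝔻 with f(𝔻) convex in the direction e^{iβ} if and only if the analytic function φ = h − e^{2iβ}·g is injective on 𝔻 with φ(𝔻) convex in the direction e^{iβ}. -/
open Complex Set

noncomputable section

/-- The open unit disk in the complex plane. -/
def 𝔻 : Set ℂ := {z : ℂ | ‖z‖ < 1}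

/-- A set `Ω ⊆ ℂ` is convex in the direction `e^{iβ}` if for every `a ∈ ℂ` the set
`{t ∈ ℝ : a + t·e^{iβ} ∈ Ω}` is an interval (order-connected). -/
def ConvexInDir (β : ℝ) (Ω : Set ℂ) : Prop :=
  ∀ a : ℂ, ({t : ℝ | a + (t : ℂ) * Complex.exp ((β : ℂ) * Complex.I) ∈ Ω}).OrdConnected

lemma disk_open : IsOpen 𝔻 := isOpen_lt continuous_norm continuous_const

lemma strictDeriv {F : ℂ → ℂ} {z : ℂ} (hF : DifferentiableOn ℂ F 𝔻) (hz : z ∈ 𝔻) :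
    HasStrictDerivAt F (deriv F z) z := by
  obtain ⟨p, hp⟩ := hF.analyticAt (disk_open.mem_nhds hz)
  exact hp.deriv ▸ hp.hasStrictDerivAt

section facts
variable (β : ℝ)

lemma habsE : ‖Complex.exp ((β : ℂ) * Complex.I)‖ = 1 :=
  Complex.norm_exp_ofReal_mul_I β

lemma hE'E : Complex.exp (-((β : ℂ) * Complex.I)) * Complex.exp ((β : ℂ) * Complex.I) = 1 := by
  rw [← Complex.exp_add]; norm_num

lemma hcE : (starRingEnd ℂ) (Complex.exp ((β : ℂ) * Complex.I))
    = Complex.exp (-((β : ℂ) * Complex.I)) := by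
  rw [← Complex.exp_conj]
  congr 1
  simp [Complex.conj_ofReal]

lemma habsE' : ‖Complex.exp (-((β : ℂ) * Complex.I))‖ = 1 := by
  have := congrArg norm (hE'E β)
  rwa [norm_mul, habsE, mul_one, norm_one] at this

lemma h5 : Complex.exp (-((β : ℂ) * Complex.I)) * Complex.exp (2 * (β : ℂ) * Complex.I)
    = Complex.exp ((β : ℂ) * Complex.I) := by
  rw [← Complex.exp_add]
  congr 1
  ring

lemma habsE2 : ‖Complex.exp (2 * (β : ℂ) * Complex.I)‖ = 1 := by
  have h : 2 * (β : ℂ) * Complex.I = ((2 * β : ℝ) : ℂ) * Complex.I := by push_cast; ring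
  rw [h]
  exact Complex.norm_exp_ofReal_mul_I _
end facts

lemma pos_aux {u v : ℂ} (h1 : u + v = 1) (h2 : ‖v‖ < ‖u‖) :
    0 < u.re - v.re := by
  have hu : u = 1 - v := by linear_combination h1
  have h2' : ‖v‖ ^ 2 < ‖u‖ ^ 2 := by
    have := norm_nonneg v
    nlinarith
  rw [Complex.sq_norm, Complex.sq_norm, hu] at h2'
  simp only [Complex.normSq_apply, Complex.sub_re, Complex.sub_im, Complex.one_re,
    Complex.one_im] at h2'
  have hre : u.re = 1 - v.re := by rw [hu]; simp
  nlinarith [h2']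

/-- Real-linear map `w ↦ A w + conj (B w)` as a continuous linear equivalence when `|B| < |A|`. -/
def shearCLE (A B : ℂ) (hAB : ‖B‖ < ‖A‖) : ℂ ≃L[ℝ] ℂ := by
  have hdC : ((Complex.normSq A - Complex.normSq B : ℝ) : ℂ) ≠ 0 := by
    have h2 : ‖B‖ ^ 2 < ‖A‖ ^ 2 := by
      have := norm_nonneg B; nlinarith
    rw [Complex.sq_norm, Complex.sq_norm] at h2
    have : (Complex.normSq A - Complex.normSq B : ℝ) ≠ 0 := by linarith
    exact_mod_cast this
  exact LinearEquiv.toContinuousLinearEquiv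
    { toFun := fun w => A * w + (starRingEnd ℂ) (B * w)
      invFun := fun y => ((starRingEnd ℂ) A * y - (starRingEnd ℂ) B * (starRingEnd ℂ) y) /
        ((Complex.normSq A - Complex.normSq B : ℝ) : ℂ)
      map_add' := by intro x y; simp only [map_add, mul_add]; ring
      map_smul' := by
        intro r x
        simp only [Complex.real_smul, map_mul, Complex.conj_ofReal, RingHom.id_apply]
        ring
      left_inv := by
        intro w
        rw [div_eq_iff hdC]
        simp only [map_add, map_mul, Complex.conj_conj]
        push_cast
        linear_combination w * Complex.mul_conj A - w * Complex.mul_conj B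
      right_inv := by
        intro y
        simp only [map_mul, map_sub, map_div₀, Complex.conj_conj, Complex.conj_ofReal]
        rw [mul_div_assoc', mul_div_assoc', ← add_div, div_eq_iff hdC]
        push_cast
        linear_combination y * Complex.mul_conj A - y * Complex.mul_conj B }

lemma shearCLE_apply (A B : ℂ) (hAB : ‖B‖ < ‖A‖) (w : ℂ) :
    shearCLE A B hAB w = A * w + (starRingEnd ℂ) (B * w) := rfl

lemma shear_hasStrictFDerivAt {h₁ g₁ : ℂ → ℂ} {A B : ℂ} {z : ℂ}
    (hA : HasStrictDerivAt h₁ A z) (hB : HasStrictDerivAt g₁ B z)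
    (hAB : ‖B‖ < ‖A‖) :
    HasStrictFDerivAt (fun w => h₁ w + (starRingEnd ℂ) (g₁ w))
      (shearCLE A B hAB : ℂ →L[ℝ] ℂ) z := by
  have h1 : HasStrictFDerivAt h₁
      ((ContinuousLinearMap.smulRight (1 : ℂ →L[ℂ] ℂ) A).restrictScalars ℝ) z :=
    hA.hasStrictFDerivAt.restrictScalars ℝ
  have h2 : HasStrictFDerivAt (fun w => (starRingEnd ℂ) (g₁ w))
      ((Complex.conjCLE : ℂ →L[ℝ] ℂ).comp
        ((ContinuousLinearMap.smulRight (1 : ℂ →L[ℂ] ℂ) B).restrictScalars ℝ)) z :=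
    (Complex.conjCLE : ℂ →L[ℝ] ℂ).hasStrictFDerivAt.comp z
      (hB.hasStrictFDerivAt.restrictScalars ℝ)
  have h3 := h1.add h2
  have he : ((ContinuousLinearMap.smulRight (1 : ℂ →L[ℂ] ℂ) A).restrictScalars ℝ) +
      ((Complex.conjCLE : ℂ →L[ℝ] ℂ).comp
        ((ContinuousLinearMap.smulRight (1 : ℂ →L[ℂ] ℂ) B).restrictScalars ℝ))
      = (shearCLE A B hAB : ℂ →L[ℝ] ℂ) := by
    ext w
    simp [shearCLE_apply, mul_comm]
  rwa [he] at h3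

lemma localFlow {β : ℝ} {u : ℂ → ℂ} {z : ℂ} (hz : z ∈ 𝔻) (L : ℂ ≃L[ℝ] ℂ)
    (hu : HasStrictFDerivAt u (L : ℂ →L[ℝ] ℂ) z) :
    ∃ δ > 0, ∃ χ : ℝ → ℂ,
      (∀ t : ℝ, |t| < δ → χ t ∈ 𝔻 ∧
        u (χ t) = u z + (t : ℂ) * Complex.exp ((β : ℂ) * Complex.I)) ∧
      HasDerivAt χ (L.symm (Complex.exp ((β : ℂ) * Complex.I))) 0 ∧ χ 0 = z := by
  set E : ℂ := Complex.exp ((β : ℂ) * Complex.I) with hE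
  set inv : ℂ → ℂ := hu.localInverse u L z with hinv
  set line : ℝ → ℂ := fun t => u z + (t : ℂ) * E with hlinedef
  have hline : HasDerivAt line E 0 := by
    have h1 : HasDerivAt (fun t : ℝ => (t : ℂ)) 1 0 := by
      simpa using (hasDerivAt_id (0 : ℝ)).ofReal_comp
    simpa [hlinedef] using (h1.mul_const E).const_add (u z)
  have hline0 : line 0 = u z := by simp [hlinedef]
  have hlt : Filter.Tendsto line (nhds 0) (nhds (u z)) := by
    simpa [hline0] using hline.continuousAt.tendsto
  have ev1 : ∀ᶠ y in nhds (u z), u (inv y) = y := hu.eventually_right_inverse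
  have ev2 : ∀ᶠ y in nhds (u z), inv y ∈ 𝔻 := by
    apply hu.localInverse_continuousAt.eventually_mem
    rw [hu.localInverse_apply_image]
    exact disk_open.mem_nhds hz
  have ev : ∀ᶠ t in nhds (0 : ℝ), inv (line t) ∈ 𝔻 ∧ u (inv (line t)) = line t :=
    hlt.eventually (ev2.and ev1)
  rw [Metric.eventually_nhds_iff] at ev
  obtain ⟨δ, hδ, hball⟩ := ev
  refine ⟨δ, hδ, fun t => inv (line t), fun t ht => ?_, ?_, ?_⟩
  · have := hball (show dist t 0 < δ by simpa [Real.dist_eq] using ht)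
    exact ⟨this.1, by rw [this.2]⟩
  · have hinv' : HasFDerivAt inv (L.symm : ℂ →L[ℝ] ℂ) (line 0) := by
      rw [hline0]; exact hu.to_localInverse.hasFDerivAt
    exact hinv'.comp_hasDerivAt 0 hline
  · show inv (line 0) = z
    rw [hline0, hinv]
    exact hu.localInverse_apply_image
lemma key {β : ℝ} {u v : ℂ → ℂ}
    (hu_inj : Set.InjOn u 𝔻) (hu_cid : ConvexInDir β (u '' 𝔻))
    (him : ∀ z ∈ 𝔻, (Complex.exp (-((β : ℂ) * Complex.I)) * u z).im
      = (Complex.exp (-((β : ℂ) * Complex.I)) * v z).im)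
    (H : ∀ z ∈ 𝔻, ∃ δ > 0, ∃ χ : ℝ → ℂ,
      (∀ t : ℝ, |t| < δ → χ t ∈ 𝔻 ∧
        u (χ t) = u z + (t : ℂ) * Complex.exp ((β : ℂ) * Complex.I)) ∧
      ∃ c > 0, HasDerivAt
        (fun t : ℝ => (Complex.exp (-((β : ℂ) * Complex.I)) * v (χ t)).re) c 0) :
    Set.InjOn v 𝔻 ∧ ConvexInDir β (v '' 𝔻) := by
  set E : ℂ := Complex.exp ((β : ℂ) * Complex.I) with hEdef
  set E' : ℂ := Complex.exp (-((β : ℂ) * Complex.I)) with hE'def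
  have hE'E : E' * E = 1 := by
    rw [hEdef, hE'def, ← Complex.exp_add]
    norm_num
  have hE'ne : E' ≠ 0 := Complex.exp_ne_zero _
  have cancel : ∀ p q : ℂ, E' * p = E' * q → p = q := fun p q hpq =>
    mul_left_cancel₀ hE'ne hpq
  have hlineC : ∀ (a : ℂ) (t : ℝ), E' * (a + (t : ℂ) * E) = E' * a + (t : ℂ) := by
    intro a t
    have : E' * (a + (t : ℂ) * E) = E' * a + (t : ℂ) * (E' * E) := by ring
    rw [this, hE'E, mul_one]
  have hline_re : ∀ (a : ℂ) (t : ℝ), (E' * (a + (t : ℂ) * E)).re = (E' * a).re + t := by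
    intro a t; rw [hlineC]; simp
  have hline_im : ∀ (a : ℂ) (t : ℝ), (E' * (a + (t : ℂ) * E)).im = (E' * a).im := by
    intro a t; rw [hlineC]; simp
  -- step: equal v-heights give a horizontal translate between u-values
  have hstep : ∀ z1 ∈ 𝔻, ∀ z2 ∈ 𝔻, (E' * v z1).im = (E' * v z2).im →
      ∃ s : ℝ, u z2 = u z1 + (s : ℂ) * E := by
    intro z1 hz1 z2 hz2 himvv
    have h1 : (E' * u z1).im = (E' * u z2).im := by
      rw [him z1 hz1, him z2 hz2, himvv]
    refine ⟨(E' * u z2 - E' * u z1).re, ?_⟩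
    apply (cancel _ _ _).symm
    rw [hlineC]
    have h2 : ((E' * u z2 - E' * u z1).re : ℂ) = E' * u z2 - E' * u z1 := by
      apply Complex.ext
      · simp
      · simp [h1]
    rw [h2]; ring
  -- the core construction
  have core : ∀ z1 ∈ 𝔻, ∃ Ψ : ℝ → ℂ,
      (∀ r : ℝ, u z1 + (r : ℂ) * E ∈ u '' 𝔻 → Ψ r ∈ 𝔻 ∧ u (Ψ r) = u z1 + (r : ℂ) * E) ∧
      (∀ r1 r2 : ℝ, u z1 + (r1 : ℂ) * E ∈ u '' 𝔻 → u z1 + (r2 : ℂ) * E ∈ u '' 𝔻 → r1 < r2 →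
        (E' * v (Ψ r1)).re < (E' * v (Ψ r2)).re) ∧
      (∀ r1 r2 : ℝ, u z1 + (r1 : ℂ) * E ∈ u '' 𝔻 → u z1 + (r2 : ℂ) * E ∈ u '' 𝔻 → r1 ≤ r2 →
        ∀ y ∈ Icc ((E' * v (Ψ r1)).re) ((E' * v (Ψ r2)).re),
          ∃ r, r ∈ Icc r1 r2 ∧ u z1 + (r : ℂ) * E ∈ u '' 𝔻 ∧ (E' * v (Ψ r)).re = y) := by
    intro z1 hz1
    set T : Set ℝ := {r : ℝ | u z1 + (r : ℂ) * E ∈ u '' 𝔻} with hTdef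
    have hTord : T.OrdConnected := hu_cid (u z1)
    set Ψ : ℝ → ℂ := fun r => Function.invFunOn u 𝔻 (u z1 + (r : ℂ) * E) with hΨdef
    have hΨ : ∀ r ∈ T, Ψ r ∈ 𝔻 ∧ u (Ψ r) = u z1 + (r : ℂ) * E := by
      intro r hr
      obtain ⟨x, hx, hux⟩ := hr
      exact ⟨Function.invFunOn_mem ⟨x, hx, hux⟩, Function.invFunOn_eq ⟨x, hx, hux⟩⟩
    set F : ℝ → ℝ := fun r => (E' * v (Ψ r)).re with hFdef
    have hkey : ∀ r0 ∈ T, (∃ δ > 0, ∀ s : ℝ, |s - r0| < δ → s ∈ T) ∧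
        ∃ c > 0, HasDerivAt F c r0 := by
      intro r0 hr0
      obtain ⟨hΨmem, hΨeq⟩ := hΨ r0 hr0
      obtain ⟨δ, hδ, χ, hχ, c, hc, hcd⟩ := H (Ψ r0) hΨmem
      have hloc : ∀ s : ℝ, |s - r0| < δ → s ∈ T ∧ Ψ s = χ (s - r0) := by
        intro s hs
        obtain ⟨hmem, hequ⟩ := hχ (s - r0) hs
        have heq2 : u (χ (s - r0)) = u z1 + (s : ℂ) * E := by
          rw [hequ, hΨeq]; push_cast; ring
        have hsT : s ∈ T := ⟨χ (s - r0), hmem, heq2⟩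
        obtain ⟨hm2, he2⟩ := hΨ s hsT
        exact ⟨hsT, hu_inj hm2 hmem (by rw [he2, heq2])⟩
      refine ⟨⟨δ, hδ, fun s hs => (hloc s hs).1⟩, c, hc, ?_⟩
      have hshift : HasDerivAt (fun s : ℝ => (E' * v (χ (s - r0))).re) c r0 := by
        have := hcd.comp_of_eq r0 ((hasDerivAt_id r0).sub_const r0) (by simp)
        rw [mul_one] at this
        exact this
      apply hshift.congr_of_eventuallyEq
      filter_upwards [eventually_abs_sub_lt r0 hδ] with s hs
      rw [hFdef]
      simp only
      rw [(hloc s hs).2]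
    have contF : ∀ r1 r2 : ℝ, r1 ∈ T → r2 ∈ T → ContinuousOn F (Icc r1 r2) := by
      intro r1 r2 hr1 hr2
      have hsub : Icc r1 r2 ⊆ T := hTord.out hr1 hr2
      intro x hx
      obtain ⟨_, c, hc, hd⟩ := hkey x (hsub hx)
      exact hd.continuousAt.continuousWithinAt
    refine ⟨Ψ, hΨ, ?_, ?_⟩
    · intro r1 r2 hr1 hr2 h12
      have hsub : Icc r1 r2 ⊆ T := hTord.out hr1 hr2
      have hmono : StrictMonoOn F (Icc r1 r2) := by
        apply strictMonoOn_of_deriv_pos (convex_Icc r1 r2) (contF r1 r2 hr1 hr2)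
        intro x hx
        rw [interior_Icc] at hx
        obtain ⟨_, c, hc, hd⟩ := hkey x (hsub (Ioo_subset_Icc_self hx))
        rw [hd.deriv]; exact hc
      exact hmono (left_mem_Icc.mpr h12.le) (right_mem_Icc.mpr h12.le) h12
    · intro r1 r2 hr1 hr2 h12 y hy
      have hsub : Icc r1 r2 ⊆ T := hTord.out hr1 hr2
      obtain ⟨r, hrIcc, hFr⟩ := intermediate_value_Icc h12 (contF r1 r2 hr1 hr2) hy
      exact ⟨r, hrIcc, hsub hrIcc, hFr⟩
  constructor
  · -- injectivity of v
    intro z1 hz1 z2 hz2 hv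
    have himvv : (E' * v z1).im = (E' * v z2).im := by rw [hv]
    obtain ⟨s, hs⟩ := hstep z1 hz1 z2 hz2 himvv
    obtain ⟨Ψ, hΨ, hmono, _⟩ := core z1 hz1
    have h0T : u z1 + ((0 : ℝ) : ℂ) * E ∈ u '' 𝔻 := by
      simpa using Set.mem_image_of_mem u hz1
    have hsT : u z1 + (s : ℂ) * E ∈ u '' 𝔻 := by
      rw [← hs]; exact Set.mem_image_of_mem u hz2
    have hΨ0 : Ψ 0 = z1 := hu_inj (hΨ 0 h0T).1 hz1 (by rw [(hΨ 0 h0T).2]; simp)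
    have hΨs : Ψ s = z2 := hu_inj (hΨ s hsT).1 hz2 (by rw [(hΨ s hsT).2, ← hs])
    rcases lt_trichotomy s 0 with hlt | heq | hgt
    · exfalso
      have := hmono s 0 hsT h0T hlt
      rw [hΨ0, hΨs, hv] at this
      exact lt_irrefl _ this
    · subst heq
      have : u z2 = u z1 := by rw [hs]; simp
      exact (hu_inj hz2 hz1 this).symm
    · exfalso
      have := hmono 0 s h0T hsT hgt
      rw [hΨ0, hΨs, hv] at this
      exact lt_irrefl _ this
  · -- convexity in direction of v '' 𝔻
    intro a
    constructor
    intro t1 ht1 t2 ht2 t ht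
    obtain ⟨z1, hz1, hvz1⟩ := ht1
    obtain ⟨z2, hz2, hvz2⟩ := ht2
    have himvv : (E' * v z1).im = (E' * v z2).im := by
      rw [hvz1, hvz2, hline_im, hline_im]
    obtain ⟨s, hs⟩ := hstep z1 hz1 z2 hz2 himvv
    obtain ⟨Ψ, hΨ, hmono, hivt⟩ := core z1 hz1
    have h0T : u z1 + ((0 : ℝ) : ℂ) * E ∈ u '' 𝔻 := by
      simpa using Set.mem_image_of_mem u hz1
    have hsT : u z1 + (s : ℂ) * E ∈ u '' 𝔻 := by
      rw [← hs]; exact Set.mem_image_of_mem u hz2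
    have hΨ0 : Ψ 0 = z1 := hu_inj (hΨ 0 h0T).1 hz1 (by rw [(hΨ 0 h0T).2]; simp)
    have hΨs : Ψ s = z2 := hu_inj (hΨ s hsT).1 hz2 (by rw [(hΨ s hsT).2, ← hs])
    have hF0 : (E' * v (Ψ 0)).re = (E' * a).re + t1 := by rw [hΨ0, hvz1, hline_re]
    have hFs : (E' * v (Ψ s)).re = (E' * a).re + t2 := by rw [hΨs, hvz2, hline_re]
    have h12 : t1 ≤ t2 := le_trans ht.1 ht.2
    rcases lt_trichotomy s 0 with hlt | heq | hgt
    · exfalso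
      have := hmono s 0 hsT h0T hlt
      rw [hF0, hFs] at this
      linarith
    · subst heq
      have hz12 : z1 = z2 := hu_inj hz1 hz2 (by rw [hs]; simp)
      have ht12 : t1 = t2 := by
        have : (E' * v z1).re = (E' * v z2).re := by rw [hz12]
        rw [hvz1, hvz2, hline_re, hline_re] at this
        linarith
      have : t = t1 := le_antisymm (ht12 ▸ ht.2) ht.1
      subst this
      exact ⟨z1, hz1, hvz1⟩
    · obtain ⟨r, hrIcc, hrT, hFr⟩ := hivt 0 s h0T hsT hgt.le ((E' * a).re + t)
        (by rw [hF0, hFs]; constructor <;> [linarith [ht.1]; linarith [ht.2]])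
      refine ⟨Ψ r, (hΨ r hrT).1, ?_⟩
      apply cancel
      apply Complex.ext
      · rw [hFr, hline_re]
      · rw [← him _ (hΨ r hrT).1, (hΨ r hrT).2, hline_im, hline_im,
          him _ hz1, hvz1, hline_im]

/-- H-provider for the direction: φ univalent CID ⇒ f univalent CID. -/
lemma Hphi (h g : ℂ → ℂ) (hh : DifferentiableOn ℂ h 𝔻) (hg : DifferentiableOn ℂ g 𝔻)
    (hloc : ∀ z ∈ 𝔻, ‖deriv g z‖ < ‖deriv h z‖) (β : ℝ) :
    ∀ z ∈ 𝔻, ∃ δ > 0, ∃ χ : ℝ → ℂ,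
      (∀ t : ℝ, |t| < δ → χ t ∈ 𝔻 ∧
        (h (χ t) - Complex.exp (2 * (β : ℂ) * Complex.I) * g (χ t))
          = (h z - Complex.exp (2 * (β : ℂ) * Complex.I) * g z)
            + (t : ℂ) * Complex.exp ((β : ℂ) * Complex.I)) ∧
      ∃ c > 0, HasDerivAt (fun t : ℝ =>
        (Complex.exp (-((β : ℂ) * Complex.I))
          * (h (χ t) + (starRingEnd ℂ) (g (χ t)))).re) c 0 := by
  intro z hz
  set E : ℂ := Complex.exp ((β : ℂ) * Complex.I) with hEdef
  set E' : ℂ := Complex.exp (-((β : ℂ) * Complex.I)) with hE'def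
  set e2 : ℂ := Complex.exp (2 * (β : ℂ) * Complex.I) with he2def
  set A : ℂ := deriv h z with hAdef
  set B : ℂ := deriv g z with hBdef
  have hAB : ‖B‖ < ‖A‖ := hloc z hz
  have habse2B : ‖e2 * B‖ = ‖B‖ := by
    rw [norm_mul, he2def, habsE2, one_mul]
  have hA0 : A - e2 * B ≠ 0 := by
    intro hcon
    have hA : A = e2 * B := by linear_combination hcon
    rw [hA, habse2B] at hAB
    exact lt_irrefl _ hAB
  have h0lt : ‖(0 : ℂ)‖ < ‖A - e2 * B‖ := by
    simpa using norm_pos_iff.mpr hA0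
  set L : ℂ ≃L[ℝ] ℂ := shearCLE (A - e2 * B) 0 h0lt with hLdef
  have hstrict : HasStrictFDerivAt (fun w => h w - e2 * g w) (L : ℂ →L[ℝ] ℂ) z := by
    have h1 : HasStrictDerivAt (fun w => h w - e2 * g w) (A - e2 * B) z :=
      (strictDeriv hh hz).sub ((strictDeriv hg hz).const_mul e2)
    have h2 := h1.hasStrictFDerivAt.restrictScalars ℝ
    have he : ((ContinuousLinearMap.toSpanSingleton ℂ (A - e2 * B)).restrictScalars ℝ)
        = (L : ℂ →L[ℝ] ℂ) := by
      ext w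
      rw [hLdef]
      simp [shearCLE_apply, mul_comm]
    rwa [he] at h2
  obtain ⟨δ, hδ, χ, hχ, hχd, hχ0⟩ := localFlow (β := β) hz L hstrict
  set m : ℂ := L.symm E with hmdef
  have hc : (A - e2 * B) * m = E := by
    have h2 := L.apply_symm_apply E
    rw [hLdef] at h2
    rw [shearCLE_apply] at h2
    simpa using h2
  have hm0 : m ≠ 0 := by
    intro h0
    rw [h0, mul_zero] at hc
    exact Complex.exp_ne_zero _ hc.symm
  set u₀ : ℂ := E' * (A * m) with hu₀def
  set v₀ : ℂ := -(E * (B * m)) with hv₀def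
  have hsum : u₀ + v₀ = 1 := by
    rw [hu₀def, hv₀def]
    linear_combination E' * hc + (B * m) * (h5 β) + hE'E β
  have habs : ‖v₀‖ < ‖u₀‖ := by
    have hmpos : 0 < ‖m‖ := norm_pos_iff.mpr hm0
    have h1 : ‖v₀‖ = ‖B‖ * ‖m‖ := by
      rw [hv₀def, norm_neg, norm_mul, norm_mul, hEdef, habsE, one_mul]
    have h2 : ‖u₀‖ = ‖A‖ * ‖m‖ := by
      rw [hu₀def, norm_mul, norm_mul, hE'def, habsE', one_mul]
    rw [h1, h2]
    exact mul_lt_mul_of_pos_right hAB hmpos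
  have hpos := pos_aux hsum habs
  -- derivative of the composite
  have hh' : HasDerivAt h A (χ 0) := by rw [hχ0]; exact (strictDeriv hh hz).hasDerivAt
  have hg' : HasDerivAt g B (χ 0) := by rw [hχ0]; exact (strictDeriv hg hz).hasDerivAt
  have hc1 : HasDerivAt (fun t : ℝ => h (χ t)) (m • A) 0 := hh'.scomp 0 hχd
  have hc2g : HasDerivAt (fun t : ℝ => g (χ t)) (m • B) 0 := hg'.scomp 0 hχd
  have hc2 : HasDerivAt (fun t : ℝ => (starRingEnd ℂ) (g (χ t)))
      (Complex.conjCLE (m • B)) 0 :=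
    (Complex.conjCLE : ℂ →L[ℝ] ℂ).hasFDerivAt.comp_hasDerivAt 0 hc2g
  have hc3 : HasDerivAt (fun t : ℝ => E' * (h (χ t) + (starRingEnd ℂ) (g (χ t))))
      (E' * (m • A + Complex.conjCLE (m • B))) 0 := (hc1.add hc2).const_mul E'
  have hc4 : HasDerivAt (fun t : ℝ =>
      (E' * (h (χ t) + (starRingEnd ℂ) (g (χ t)))).re)
      ((E' * (m • A + Complex.conjCLE (m • B))).re) 0 :=
    (Complex.reCLM : ℂ →L[ℝ] ℝ).hasFDerivAt.comp_hasDerivAt 0 hc3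
  have hceq : (E' * (m • A + Complex.conjCLE (m • B))).re = u₀.re - v₀.re := by
    have h7 : E' * (m • A + Complex.conjCLE (m • B))
        = u₀ + (starRingEnd ℂ) (E * (m * B)) := by
      have hcc : (Complex.conjCLE (m • B) : ℂ) = (starRingEnd ℂ) (m * B) := by
        simp [Complex.conjCLE_apply, smul_eq_mul]
      have h8 : (starRingEnd ℂ) (E * (m * B)) = E' * (starRingEnd ℂ) (m * B) := by
        rw [map_mul, hEdef, hcE β, ← hE'def]
      rw [hcc, smul_eq_mul, hu₀def, h8]
      ring
    have hv' : E * (m * B) = -v₀ := by rw [hv₀def]; ring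
    rw [h7, Complex.add_re, Complex.conj_re, hv', Complex.neg_re]
    ring
  refine ⟨δ, hδ, χ, hχ, (E' * (m • A + Complex.conjCLE (m • B))).re, ?_, hc4⟩
  rw [hceq]
  exact hpos

/-- H-provider for the direction: f univalent CID ⇒ φ univalent CID. -/
lemma Hf (h g : ℂ → ℂ) (hh : DifferentiableOn ℂ h 𝔻) (hg : DifferentiableOn ℂ g 𝔻)
    (hloc : ∀ z ∈ 𝔻, ‖deriv g z‖ < ‖deriv h z‖) (β : ℝ) :
    ∀ z ∈ 𝔻, ∃ δ > 0, ∃ χ : ℝ → ℂ,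
      (∀ t : ℝ, |t| < δ → χ t ∈ 𝔻 ∧
        (h (χ t) + (starRingEnd ℂ) (g (χ t)))
          = (h z + (starRingEnd ℂ) (g z)) + (t : ℂ) * Complex.exp ((β : ℂ) * Complex.I)) ∧
      ∃ c > 0, HasDerivAt (fun t : ℝ =>
        (Complex.exp (-((β : ℂ) * Complex.I))
          * (h (χ t) - Complex.exp (2 * (β : ℂ) * Complex.I) * g (χ t))).re) c 0 := by
  intro z hz
  set E : ℂ := Complex.exp ((β : ℂ) * Complex.I) with hEdef
  set E' : ℂ := Complex.exp (-((β : ℂ) * Complex.I)) with hE'def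
  set e2 : ℂ := Complex.exp (2 * (β : ℂ) * Complex.I) with he2def
  set A : ℂ := deriv h z with hAdef
  set B : ℂ := deriv g z with hBdef
  have hAB : ‖B‖ < ‖A‖ := hloc z hz
  set L : ℂ ≃L[ℝ] ℂ := shearCLE A B hAB with hLdef
  have hstrict : HasStrictFDerivAt (fun w => h w + (starRingEnd ℂ) (g w))
      (L : ℂ →L[ℝ] ℂ) z :=
    shear_hasStrictFDerivAt (strictDeriv hh hz) (strictDeriv hg hz) hAB
  obtain ⟨δ, hδ, χ, hχ, hχd, hχ0⟩ := localFlow (β := β) hz L hstrict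
  set m : ℂ := L.symm E with hmdef
  have hc : A * m + (starRingEnd ℂ) (B * m) = E := by
    have h2 := L.apply_symm_apply E
    rw [hLdef] at h2
    rw [shearCLE_apply] at h2
    exact h2
  have hm0 : m ≠ 0 := by
    intro h0
    rw [h0, mul_zero, mul_zero, map_zero, add_zero] at hc
    exact Complex.exp_ne_zero _ hc.symm
  set u₀ : ℂ := E' * (A * m) with hu₀def
  set v₀ : ℂ := (starRingEnd ℂ) (E * (B * m)) with hv₀def
  have h8 : v₀ = E' * (starRingEnd ℂ) (B * m) := by
    rw [hv₀def, map_mul, hEdef, hcE β, ← hE'def]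
  have hsum : u₀ + v₀ = 1 := by
    rw [hu₀def, h8, ← mul_add, hc, hE'def, hEdef, hE'E β]
  have habs : ‖v₀‖ < ‖u₀‖ := by
    have hmpos : 0 < ‖m‖ := norm_pos_iff.mpr hm0
    have h1 : ‖v₀‖ = ‖B‖ * ‖m‖ := by
      rw [hv₀def, Complex.norm_conj, norm_mul, norm_mul, hEdef, habsE, one_mul]
    have h2 : ‖u₀‖ = ‖A‖ * ‖m‖ := by
      rw [hu₀def, norm_mul, norm_mul, hE'def, habsE', one_mul]
    rw [h1, h2]
    exact mul_lt_mul_of_pos_right hAB hmpos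
  have hpos := pos_aux hsum habs
  have hh' : HasDerivAt h A (χ 0) := by rw [hχ0]; exact (strictDeriv hh hz).hasDerivAt
  have hg' : HasDerivAt g B (χ 0) := by rw [hχ0]; exact (strictDeriv hg hz).hasDerivAt
  have hc1 : HasDerivAt (fun t : ℝ => h (χ t)) (m • A) 0 := hh'.scomp 0 hχd
  have hc2g : HasDerivAt (fun t : ℝ => g (χ t)) (m • B) 0 := hg'.scomp 0 hχd
  have hc3 : HasDerivAt (fun t : ℝ => E' * (h (χ t) - e2 * g (χ t)))
      (E' * (m • A - e2 * (m • B))) 0 := (hc1.sub (hc2g.const_mul e2)).const_mul E'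
  have hc4 : HasDerivAt (fun t : ℝ => (E' * (h (χ t) - e2 * g (χ t))).re)
      ((E' * (m • A - e2 * (m • B))).re) 0 :=
    (Complex.reCLM : ℂ →L[ℝ] ℝ).hasFDerivAt.comp_hasDerivAt 0 hc3
  have hceq : (E' * (m • A - e2 * (m • B))).re = u₀.re - v₀.re := by
    have h7 : E' * (m • A - e2 * (m • B)) = u₀ - E * (B * m) := by
      simp only [smul_eq_mul]
      rw [hu₀def]
      linear_combination (-(m * B)) * (h5 β)
    have h9 : (E * (B * m)).re = v₀.re := by rw [hv₀def, Complex.conj_re]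
    rw [h7, Complex.sub_re, h9]
  refine ⟨δ, hδ, χ, hχ, (E' * (m • A - e2 * (m • B))).re, ?_, hc4⟩
  rw [hceq]
  exact hpos

lemma himf (h g : ℂ → ℂ) (β : ℝ) (z : ℂ) :
    (Complex.exp (-((β : ℂ) * Complex.I)) * (h z + (starRingEnd ℂ) (g z))).im
      = (Complex.exp (-((β : ℂ) * Complex.I))
        * (h z - Complex.exp (2 * (β : ℂ) * Complex.I) * g z)).im := by
  set E : ℂ := Complex.exp ((β : ℂ) * Complex.I) with hEdef
  set E' : ℂ := Complex.exp (-((β : ℂ) * Complex.I)) with hE'def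
  set e2 : ℂ := Complex.exp (2 * (β : ℂ) * Complex.I) with he2def
  have heq : E' * (h z + (starRingEnd ℂ) (g z))
      = E' * (h z - e2 * g z) + ((starRingEnd ℂ) E * (starRingEnd ℂ) (g z) + E * g z) := by
    rw [hEdef, hcE β, ← hE'def]
    linear_combination (g z) * (h5 β)
  rw [heq]
  have him0 : ((starRingEnd ℂ) E * (starRingEnd ℂ) (g z) + E * g z).im = 0 := by
    rw [← map_mul]
    simp only [Complex.add_im, Complex.conj_im, Complex.mul_im]
    ring
  rw [Complex.add_im, him0, add_zero]

/-- (Clunie–Sheil-Small) A sense-preserving locally univalent harmonic mapping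
`f = h + conj ∘ g` on `𝔻` is injective with image convex in the direction `e^{iβ}` if and only
if the analytic function `φ = h − e^{2iβ}·g` is injective with image convex in the direction
`e^{iβ}`. -/
theorem stmt2 (h g : ℂ → ℂ)
    (hh : DifferentiableOn ℂ h 𝔻) (hg : DifferentiableOn ℂ g 𝔻)
    (hloc : ∀ z ∈ 𝔻, ‖deriv g z‖ < ‖deriv h z‖)
    (β : ℝ) (f φ : ℂ → ℂ)
    (hf : f = fun z => h z + (starRingEnd ℂ) (g z))
    (hφ : φ = fun z => h z - Complex.exp (2 * (β : ℂ) * Complex.I) * g z) :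
    (Set.InjOn f 𝔻 ∧ ConvexInDir β (f '' 𝔻)) ↔
    (Set.InjOn φ 𝔻 ∧ ConvexInDir β (φ '' 𝔻)) := by
  subst hf hφ
  constructor
  · rintro ⟨hinj, hcid⟩
    exact key hinj hcid (fun z _ => himf h g β z) (Hf h g hh hg hloc β)
  · rintro ⟨hinj, hcid⟩
    exact key hinj hcid (fun z _ => (himf h g β z).symm) (Hphi h g hh hg hloc β)
end
end

section
/- The harmonic Enneper mapping f_E(z) = z + conj(z)³/3 is injective on 𝔻 and f_E(𝔻) is convex in the direction of the imaginary axis. -/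
open Complex Set

noncomputable section

/-- A set `Ω ⊆ ℂ` is convex in the direction of the imaginary axis if for every `a ∈ ℂ` the set
`{t ∈ ℝ : a + t·i ∈ Ω}` is an interval (order-connected). -/
def ConvexImDir (Ω : Set ℂ) : Prop :=
  ∀ a : ℂ, ({t : ℝ | a + (t : ℂ) * Complex.I ∈ Ω}).OrdConnected

/-- The harmonic Enneper mapping `f_E(z) = z + conj(z)³/3`. -/
def fE : ℂ → ℂ := fun z => z + ((starRingEnd ℂ) z) ^ 3 / 3

/-! ### Auxiliary lemmas -/

lemma fE_re (z : ℂ) : (fE z).re = z.re + z.re^3/3 - z.re*z.im^2 := by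
  simp [fE, Complex.div_re, Complex.normSq, pow_succ, Complex.mul_re, Complex.mul_im]
  ring

lemma fE_im (z : ℂ) : (fE z).im = z.im + z.im^3/3 - z.re^2*z.im := by
  simp [fE, Complex.div_im, Complex.normSq, pow_succ, Complex.mul_re, Complex.mul_im]
  ring

/-- The real cube root. -/
def cbrt (x : ℝ) : ℝ := if (0:ℝ) ≤ x then x ^ ((1:ℝ)/3) else -((-x) ^ ((1:ℝ)/3))

lemma cbrt_cube (x : ℝ) : (cbrt x) ^ 3 = x := by
  have key : ∀ y : ℝ, 0 ≤ y → (y ^ ((1:ℝ)/3)) ^ 3 = y := by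
    intro y hy
    rw [← Real.rpow_natCast (y ^ ((1:ℝ)/3)) 3, ← Real.rpow_mul hy]
    norm_num
  rcases le_or_gt 0 x with h | h
  · rw [cbrt, if_pos h]; exact key x h
  · rw [cbrt, if_neg (not_le.mpr h), Odd.neg_pow ⟨1, by norm_num⟩, key (-x) (by linarith)]
    ring

lemma cbrt_continuous : Continuous cbrt := by
  have h1 : Continuous fun x : ℝ => x ^ ((1:ℝ)/3) := by
    rw [continuous_iff_continuousAt]
    intro x
    exact Real.continuousAt_rpow_const x _ (Or.inr (by norm_num))
  have h2 : Continuous fun x : ℝ => -((-x) ^ ((1:ℝ)/3)) := (h1.comp continuous_neg).neg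
  unfold cbrt
  exact Continuous.if_le h1 h2 continuous_const continuous_id fun x hx => by
    rw [← hx]
    simp [Real.zero_rpow (by norm_num : (1:ℝ)/3 ≠ 0)]

/-- Explicit (Cardano) solution of `x³ + 3(1-y²)x = 3c`. -/
def Xc (c y : ℝ) : ℝ :=
  cbrt (3*c/2 + Real.sqrt ((3*c/2)^2 + (1-y^2)^3)) +
  cbrt (3*c/2 - Real.sqrt ((3*c/2)^2 + (1-y^2)^3))

lemma cubic_strictMono {p : ℝ} (hp : 0 < p) : StrictMono fun x : ℝ => x^3 + 3*p*x := by
  intro a b hab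
  simp only
  nlinarith [sq_nonneg (a+b), sq_nonneg (a-b), mul_pos (sub_pos.mpr hab) hp]

lemma Xc_root (c y : ℝ) (hy : y^2 ≤ 1) :
    (Xc c y)^3 + 3*(1-y^2)*(Xc c y) = 3*c := by
  set p : ℝ := 1 - y^2 with hpdef
  have hp0 : 0 ≤ p := by rw [hpdef]; linarith
  set D : ℝ := Real.sqrt ((3*c/2)^2 + p^3) with hD
  have hD2 : D^2 = (3*c/2)^2 + p^3 := Real.sq_sqrt (by positivity)
  set u : ℝ := cbrt (3*c/2 + D) with hu
  set v : ℝ := cbrt (3*c/2 - D) with hv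
  have hu3 : u^3 = 3*c/2 + D := cbrt_cube _
  have hv3 : v^3 = 3*c/2 - D := cbrt_cube _
  have huv : u * v = -p := by
    have h1 : (u*v)^3 = (-p)^3 := by
      rw [mul_pow, hu3, hv3]; linear_combination -hD2
    exact (Odd.strictMono_pow (R := ℝ) ⟨1, by norm_num⟩).injective h1
  show (u + v)^3 + 3*p*(u+v) = 3*c
  linear_combination hu3 + hv3 + (3*(u+v))*huv

lemma Xc_continuous (c : ℝ) : Continuous fun y => Xc c y := by
  have hs : Continuous fun y : ℝ => Real.sqrt ((3*c/2)^2 + (1-y^2)^3) :=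
    Real.continuous_sqrt.comp (by continuity)
  exact (cbrt_continuous.comp (continuous_const.add hs)).add
    (cbrt_continuous.comp (continuous_const.sub hs))

lemma root_bound {p c x : ℝ} (hp : 0 < p) (hx : x^3 + 3*p*x = 3*c)
    (hc : 9*c^2 < 16*p^3) : x^2 < p := by
  set r : ℝ := Real.sqrt p with hr
  have hr0 : 0 < r := Real.sqrt_pos.mpr hp
  have hr2 : r^2 = p := Real.sq_sqrt hp.le
  have hpr : 16*p^2*r^2 = 16*p^3 := by rw [hr2]; ring
  have h4 : 0 < 4*p*r := by positivity
  have h1 : 3*c < 4*p*r := by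
    by_contra h
    push_neg at h
    nlinarith [mul_nonneg (by linarith : (0:ℝ) ≤ 3*c - 4*p*r)
      (by linarith : (0:ℝ) ≤ 3*c + 4*p*r)]
  have h2 : -(4*p*r) < 3*c := by
    by_contra h
    push_neg at h
    nlinarith [mul_nonneg (by linarith : (0:ℝ) ≤ -(3*c) - 4*p*r)
      (by linarith : (0:ℝ) ≤ -(3*c) + 4*p*r)]
  have hm := cubic_strictMono hp
  have hxr : x < r := by
    by_contra h
    push_neg at h
    have := hm.le_iff_le.mpr h
    nlinarith
  have hxr' : -r < x := by
    by_contra h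
    push_neg at h
    have := hm.le_iff_le.mpr h
    nlinarith
  nlinarith

lemma bound_of_root {p c x : ℝ} (hp : 0 < p) (hx2 : x^2 < p)
    (hroot : x^3 + 3*p*x = 3*c) : 9*c^2 < 16*p^3 := by
  have hsq : 9*c^2 = x^2*(x^2+3*p)^2 := by
    linear_combination (-(3*c + x^3 + 3*p*x)) * hroot
  rw [hsq]
  nlinarith [mul_pos (sub_pos.mpr hx2)
    (show (0:ℝ) < x^2*x^2 + 7*p*x^2 + 16*p^2 by positivity)]

lemma Xc_eq {c y x : ℝ} (hy : y^2 < 1) (hroot : x^3 + 3*(1-y^2)*x = 3*c) :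
    Xc c y = x := by
  have hp : 0 < 1 - y^2 := by linarith
  apply (cubic_strictMono hp).injective
  show (Xc c y)^3 + 3*(1-y^2)*(Xc c y) = x^3 + 3*(1-y^2)*x
  rw [Xc_root c y hy.le, hroot]

/-- The imaginary part of `fE` along the level curve `Re (fE z) = c`. -/
def Vc (c y : ℝ) : ℝ := y + y^3/3 - (Xc c y)^2 * y

lemma Vc_continuous (c : ℝ) : Continuous (Vc c) := by
  unfold Vc
  apply Continuous.sub
  · continuity
  · exact ((Xc_continuous c).pow 2).mul continuous_id

lemma exists_point (c : ℝ) {y1 y2 d : ℝ} (hp1 : 0 < 1 - y1^2) (hp2 : 0 < 1 - y2^2)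
    (hb1 : 9*c^2 < 16*(1-y1^2)^3) (hb2 : 9*c^2 < 16*(1-y2^2)^3)
    (hd : d ∈ uIcc (Vc c y1) (Vc c y2)) :
    ∃ x y : ℝ, x^2 + y^2 < 1 ∧ x + x^3/3 - x*y^2 = c ∧ y + y^3/3 - x^2*y = d := by
  obtain ⟨y, hy, hVy⟩ :=
    intermediate_value_uIcc ((Vc_continuous c).continuousOn (s := uIcc y1 y2)) hd
  have hy2 : y^2 ≤ y1^2 ∨ y^2 ≤ y2^2 := by
    rcases Set.mem_uIcc.mp hy with ⟨h, h'⟩ | ⟨h, h'⟩ <;>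
      rcases le_total 0 y with h0 | h0
    · right; nlinarith
    · left; nlinarith
    · left; nlinarith
    · right; nlinarith
  have hp : 0 < 1 - y^2 := by rcases hy2 with h | h <;> nlinarith
  have hb : 9*c^2 < 16*(1-y^2)^3 := by
    rcases hy2 with h | h
    · have hpp : 1 - y1^2 ≤ 1 - y^2 := by linarith
      have := pow_le_pow_left₀ hp1.le hpp 3
      linarith
    · have hpp : 1 - y2^2 ≤ 1 - y^2 := by linarith
      have := pow_le_pow_left₀ hp2.le hpp 3
      linarith
  have hroot : (Xc c y)^3 + 3*(1-y^2)*(Xc c y) = 3*c := Xc_root c y (by nlinarith)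
  have hxb : (Xc c y)^2 < 1 - y^2 := root_bound hp hroot hb
  refine ⟨Xc c y, y, by nlinarith, by linarith, ?_⟩
  have : Vc c y = y + y^3/3 - (Xc c y)^2 * y := rfl
  linarith [hVy, this]

lemma mem_D_iff (z : ℂ) : z ∈ 𝔻 ↔ z.re^2 + z.im^2 < 1 := by
  rw [𝔻, mem_setOf_eq]
  constructor <;> intro h <;>
    [ (have h2 := Complex.sq_norm z; rw [Complex.normSq_apply] at h2;
       nlinarith [norm_nonneg z]);
      (have h2 := Complex.sq_norm z; rw [Complex.normSq_apply] at h2;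
       nlinarith [norm_nonneg z])]

lemma fE_injOn : Set.InjOn fE 𝔻 := by
  intro z hz w hw h
  by_contra hne
  have hz1 : ‖z‖ < 1 := hz
  have hw1 : ‖w‖ < 1 := hw
  have key : z - w = ((starRingEnd ℂ) w ^ 3 - (starRingEnd ℂ) z ^ 3) / 3 := by
    have h' : z + ((starRingEnd ℂ) z) ^ 3 / 3 = w + ((starRingEnd ℂ) w) ^ 3 / 3 := h
    linear_combination h'
  have hconj : (starRingEnd ℂ) w ^ 3 - (starRingEnd ℂ) z ^ 3
      = (starRingEnd ℂ) (w ^ 3 - z ^ 3) := by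
    rw [map_sub, map_pow, map_pow]
  have habs : ‖z - w‖ = ‖w ^ 3 - z ^ 3‖ / 3 := by
    rw [key, hconj, norm_div, Complex.norm_conj]
    norm_num
  have hfac : w ^ 3 - z ^ 3 = (w - z) * (w^2 + w*z + z^2) := by ring
  rw [hfac, norm_mul, norm_sub_rev w z] at habs
  have hpos : 0 < ‖z - w‖ := by
    rw [norm_pos_iff]
    exact sub_ne_zero.mpr hne
  have hle : ‖w^2 + w*z + z^2‖ ≤
      ‖w‖ ^ 2 + ‖w‖ * ‖z‖ + ‖z‖ ^ 2 := by
    calc ‖w^2 + w*z + z^2‖ ≤ ‖w^2 + w*z‖ + ‖z^2‖ :=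
          norm_add_le _ _
      _ ≤ ‖w^2‖ + ‖w*z‖ + ‖z^2‖ := by
          linarith [norm_add_le (w^2) (w*z)]
      _ = ‖w‖ ^ 2 + ‖w‖ * ‖z‖ + ‖z‖ ^ 2 := by
          rw [norm_pow, norm_pow, norm_mul]
  have hA3 : ‖w^2 + w*z + z^2‖ < 3 := by
    nlinarith [norm_nonneg z, norm_nonneg w]
  nlinarith [mul_lt_mul_of_pos_left hA3 hpos, habs]

lemma fE_convexImDir : ConvexImDir (fE '' 𝔻) := by
  intro a
  constructor
  intro t1 ht1 t2 ht2 t ht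
  obtain ⟨z1, hz1, hfz1⟩ := ht1
  obtain ⟨z2, hz2, hfz2⟩ := ht2
  have hd1 : z1.re^2 + z1.im^2 < 1 := (mem_D_iff z1).mp hz1
  have hd2 : z2.re^2 + z2.im^2 < 1 := (mem_D_iff z2).mp hz2
  have hre1 : z1.re + z1.re^3/3 - z1.re*z1.im^2 = a.re := by
    rw [← fE_re, hfz1]; simp
  have hre2 : z2.re + z2.re^3/3 - z2.re*z2.im^2 = a.re := by
    rw [← fE_re, hfz2]; simp
  have him1 : z1.im + z1.im^3/3 - z1.re^2*z1.im = a.im + t1 := by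
    rw [← fE_im, hfz1]; simp
  have him2 : z2.im + z2.im^3/3 - z2.re^2*z2.im = a.im + t2 := by
    rw [← fE_im, hfz2]; simp
  have hp1 : 0 < 1 - z1.im^2 := by nlinarith [sq_nonneg z1.re]
  have hp2 : 0 < 1 - z2.im^2 := by nlinarith [sq_nonneg z2.re]
  have hroot1 : z1.re^3 + 3*(1-z1.im^2)*z1.re = 3*a.re := by linarith
  have hroot2 : z2.re^3 + 3*(1-z2.im^2)*z2.re = 3*a.re := by linarith
  have hb1 : 9*a.re^2 < 16*(1-z1.im^2)^3 :=
    bound_of_root hp1 (by linarith) hroot1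
  have hb2 : 9*a.re^2 < 16*(1-z2.im^2)^3 :=
    bound_of_root hp2 (by linarith) hroot2
  have hX1 : Xc a.re z1.im = z1.re := Xc_eq (by linarith [sq_nonneg z1.re]) hroot1
  have hX2 : Xc a.re z2.im = z2.re := Xc_eq (by linarith [sq_nonneg z2.re]) hroot2
  have hV1 : Vc a.re z1.im = a.im + t1 := by rw [Vc, hX1]; linarith
  have hV2 : Vc a.re z2.im = a.im + t2 := by rw [Vc, hX2]; linarith
  have hmem : a.im + t ∈ uIcc (Vc a.re z1.im) (Vc a.re z2.im) := by
    rw [hV1, hV2]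
    exact Icc_subset_uIcc ⟨by linarith [ht.1], by linarith [ht.2]⟩
  obtain ⟨x, y, hxy, hu, hv⟩ := exists_point a.re hp1 hp2 hb1 hb2 hmem
  refine ⟨(x : ℂ) + (y : ℝ) * Complex.I, ?_, ?_⟩
  · rw [mem_D_iff]; simp; nlinarith
  · have hzre : ((x : ℂ) + (y : ℝ) * Complex.I).re = x := by simp
    have hzim : ((x : ℂ) + (y : ℝ) * Complex.I).im = y := by simp
    apply Complex.ext
    · rw [fE_re, hzre, hzim]; simp; linarith
    · rw [fE_im, hzre, hzim]; simp; linarith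

/-- The harmonic Enneper mapping is injective on `𝔻` and its image is convex in the direction
of the imaginary axis. -/
theorem stmt7 : Set.InjOn fE 𝔻 ∧ ConvexImDir (fE '' 𝔻) := by
  exact ⟨fE_injOn, fE_convexImDir⟩
end
end

section
/- The harmonic Scherk mapping f_S = h_S + conj∘g_S, where h_S(z) = (1/4)·log((1+z)/(1−z)) + (i/4)·log((i−z)/(i+z)) and g_S(z) = (1/4)·log((1+z)/(1−z)) − (i/4)·log((i−z)/(i+z)) (principal branches), is injective on 𝔻 and f_S(𝔻) is convex in the direction of the imaginary axis. -/
open Complex Set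

noncomputable section

/-- Analytic part `h_S` of the harmonic Scherk mapping. -/
def hS : ℂ → ℂ := fun z =>
  (1 / 4) * Complex.log ((1 + z) / (1 - z)) +
    (Complex.I / 4) * Complex.log ((Complex.I - z) / (Complex.I + z))

/-- Co-analytic part `g_S` of the harmonic Scherk mapping. -/
def gS : ℂ → ℂ := fun z =>
  (1 / 4) * Complex.log ((1 + z) / (1 - z)) -
    (Complex.I / 4) * Complex.log ((Complex.I - z) / (Complex.I + z))

/-- The harmonic Scherk mapping `f_S = h_S + conj ∘ g_S`. -/
def fS : ℂ → ℂ := fun z => hS z + (starRingEnd ℂ) (gS z)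

/-! ### Auxiliary lemmas -/

lemma fS_re' (z : ℂ) : (fS z).re = (1/2) * Real.log (‖(1+z)/(1-z)‖) := by
  simp [fS, hS, gS, Complex.add_re, Complex.sub_re, Complex.mul_re, Complex.mul_im,
    Complex.log_re, Complex.log_im, Complex.div_re, Complex.div_im, Complex.normSq]
  ring

lemma fS_im' (z : ℂ) : (fS z).im = (1/2) * Real.log (‖(I-z)/(I+z)‖) := by
  simp [fS, hS, gS, Complex.add_im, Complex.sub_im, Complex.mul_re, Complex.mul_im,
    Complex.log_re, Complex.log_im, Complex.div_re, Complex.div_im, Complex.normSq]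
  ring

lemma one_sub_ne' {z : ℂ} (hz : ‖z‖ < 1) : (1:ℂ) - z ≠ 0 := by
  intro h; have : z = 1 := by linear_combination -h
  simp [this] at hz
lemma one_add_ne' {z : ℂ} (hz : ‖z‖ < 1) : (1:ℂ) + z ≠ 0 := by
  intro h; have : z = -1 := by linear_combination h
  simp [this] at hz
lemma I_sub_ne' {z : ℂ} (hz : ‖z‖ < 1) : Complex.I - z ≠ 0 := by
  intro h; have : z = Complex.I := by linear_combination -h
  simp [this] at hz
lemma I_add_ne' {z : ℂ} (hz : ‖z‖ < 1) : Complex.I + z ≠ 0 := by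
  intro h; have : z = -Complex.I := by linear_combination h
  simp [this] at hz

lemma abs_eq_of_log' {w1 w2 : ℂ} (h1 : w1 ≠ 0) (h2 : w2 ≠ 0)
    (h : Real.log (‖w1‖) = Real.log (‖w2‖)) :
    ‖w1‖ = ‖w2‖ := by
  rw [← Real.exp_log (norm_pos_iff.mpr h1), ← Real.exp_log (norm_pos_iff.mpr h2), h]

lemma cross_normSq' {a b c d : ℂ} (hb : b ≠ 0) (hd : d ≠ 0)
    (h : ‖a/b‖ = ‖c/d‖) :
    Complex.normSq a * Complex.normSq d = Complex.normSq b * Complex.normSq c := by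
  have h' : ‖a‖ * ‖d‖ = ‖b‖ * ‖c‖ := by
    rw [norm_div, norm_div] at h
    field_simp [norm_ne_zero_iff.mpr hb, norm_ne_zero_iff.mpr hd] at h
    linarith [h]
  have := congrArg (fun t => t^2) h'
  simpa [mul_pow, Complex.sq_norm] using this

lemma core' {x1 y1 x2 y2 : ℝ} (h1 : x1^2+y1^2 < 1) (h2 : x2^2+y2^2 < 1)
  (hx : ((1+x1)^2+y1^2) * ((1-x2)^2+y2^2) = ((1-x1)^2+y1^2) * ((1+x2)^2+y2^2))
  (hy : (x1^2+(1-y1)^2) * (x2^2+(1+y2)^2) = (x1^2+(1+y1)^2) * (x2^2+(1-y2)^2)) :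
  x1 = x2 ∧ y1 = y2 := by
  have hA1 : (0:ℝ) < 1+x1^2+y1^2 := by positivity
  have hA2 : (0:ℝ) < 1+x2^2+y2^2 := by positivity
  have ex : x1 * (1+x2^2+y2^2) = x2 * (1+x1^2+y1^2) := by linarith [hx]
  have ey : y1 * (1+x2^2+y2^2) = y2 * (1+x1^2+y1^2) := by linarith [hy]
  have es : (x1^2+y1^2) * (1+x2^2+y2^2)^2 = (x2^2+y2^2) * (1+x1^2+y1^2)^2 := by
    linear_combination (x1*(1+x2^2+y2^2) + x2*(1+x1^2+y1^2)) * ex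
      + (y1*(1+x2^2+y2^2) + y2*(1+x1^2+y1^2)) * ey
  have hfac : (x1^2+y1^2 - (x2^2+y2^2)) * (1 - (x1^2+y1^2)*(x2^2+y2^2)) = 0 := by
    linear_combination es
  have hlt : (x1^2+y1^2)*(x2^2+y2^2) < 1 := by
    nlinarith [sq_nonneg x1, sq_nonneg y1, sq_nonneg x2, sq_nonneg y2,
      mul_nonneg (by positivity : (0:ℝ) ≤ x1^2+y1^2) (by positivity : (0:ℝ) ≤ x2^2+y2^2)]
  have hs : x1^2+y1^2 = x2^2+y2^2 := by
    rcases mul_eq_zero.1 hfac with h | h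
    · linarith
    · linarith
  have hAeq : 1+x1^2+y1^2 = 1+x2^2+y2^2 := by linarith
  refine ⟨?_, ?_⟩
  · have h := ex; rw [hAeq] at h
    exact mul_left_cancel₀ (ne_of_gt hA2) (by linarith [h])
  · have h := ey; rw [hAeq] at h
    exact mul_left_cancel₀ (ne_of_gt hA2) (by linarith [h])

lemma sq_lt_one' {z : ℂ} (hz : ‖z‖ < 1) : z.re^2 + z.im^2 < 1 := by
  have := Complex.sq_norm z
  have h2 : ‖z‖^2 < 1 := by nlinarith [norm_nonneg z]
  rw [Complex.sq_norm, Complex.normSq_apply] at h2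
  nlinarith [h2]

lemma fS_injOn' : Set.InjOn fS 𝔻 := by
  intro z1 h1 z2 h2 heq
  have hre : (fS z1).re = (fS z2).re := by rw [heq]
  have him : (fS z1).im = (fS z2).im := by rw [heq]
  rw [fS_re', fS_re'] at hre
  rw [fS_im', fS_im'] at him
  have h1' : ‖z1‖ < 1 := h1
  have h2' : ‖z2‖ < 1 := h2
  have hab1 : ‖(1+z1)/(1-z1)‖ = ‖(1+z2)/(1-z2)‖ :=
    abs_eq_of_log' (div_ne_zero (one_add_ne' h1') (one_sub_ne' h1'))
      (div_ne_zero (one_add_ne' h2') (one_sub_ne' h2')) (by linarith [hre])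
  have hab2 : ‖(I-z1)/(I+z1)‖ = ‖(I-z2)/(I+z2)‖ :=
    abs_eq_of_log' (div_ne_zero (I_sub_ne' h1') (I_add_ne' h1'))
      (div_ne_zero (I_sub_ne' h2') (I_add_ne' h2')) (by linarith [him])
  have e1 := cross_normSq' (one_sub_ne' h1') (one_sub_ne' h2') hab1
  have e2 := cross_normSq' (I_add_ne' h1') (I_add_ne' h2') hab2
  simp only [Complex.normSq_apply, Complex.add_re, Complex.add_im, Complex.sub_re,
    Complex.sub_im, Complex.one_re, Complex.one_im, Complex.I_re, Complex.I_im] at e1 e2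
  have := core' (sq_lt_one' h1') (sq_lt_one' h2') (by ring_nf; ring_nf at e1; linarith [e1])
    (by ring_nf; ring_nf at e2; linarith [e2])
  exact Complex.ext this.1 this.2

/-! ### Level sets of the real part -/

lemma level_iff' (u : ℝ) (z : ℂ) (hz : ‖z‖ < 1) :
    (fS z).re = u ↔
      2*z.re = ((Real.exp (4*u) - 1)/(Real.exp (4*u) + 1)) * (1 + Complex.normSq z) := by
  set E := Real.exp (4*u) with hEdef
  have hE : 0 < E := Real.exp_pos _
  have hE1 : 0 < E + 1 := by linarith
  have hN1 : Complex.normSq (1+z) = (1 + Complex.normSq z) + 2*z.re := by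
    simp [Complex.normSq_apply, Complex.add_re, Complex.add_im]; ring
  have hN2 : Complex.normSq (1-z) = (1 + Complex.normSq z) - 2*z.re := by
    simp [Complex.normSq_apply, Complex.sub_re, Complex.sub_im]; ring
  have hN1pos : 0 < Complex.normSq (1+z) := Complex.normSq_pos.2 (one_add_ne' hz)
  have hN2pos : 0 < Complex.normSq (1-z) := Complex.normSq_pos.2 (one_sub_ne' hz)
  have hre : (fS z).re = (1/4) * Real.log (Complex.normSq (1+z)/Complex.normSq (1-z)) := by
    rw [fS_re', Complex.norm_def, Complex.normSq_div, Real.log_sqrt (by positivity)]; ring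
  rw [hre]
  constructor
  · intro h
    have hlog : Real.log (Complex.normSq (1+z)/Complex.normSq (1-z)) = 4*u := by linarith
    have hR : Complex.normSq (1+z)/Complex.normSq (1-z) = E := by
      rw [← Real.exp_log (by positivity : 0 < Complex.normSq (1+z)/Complex.normSq (1-z)), hlog]
    have hNE : Complex.normSq (1+z) = E * Complex.normSq (1-z) := by
      field_simp at hR; linarith [hR]
    rw [div_mul_eq_mul_div, eq_div_iff (ne_of_gt hE1)]
    linear_combination hNE - hN1 + E*hN2
  · intro h
    have h' : 2*z.re * (E+1) = (E - 1) * (1 + Complex.normSq z) := by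
      rw [div_mul_eq_mul_div] at h
      field_simp at h; linarith [h]
    have hNE : Complex.normSq (1+z) = E * Complex.normSq (1-z) := by
      linear_combination h' + hN1 - E*hN2
    have hR : Complex.normSq (1+z)/Complex.normSq (1-z) = E := by
      rw [hNE]; field_simp
    rw [hR, hEdef, Real.log_exp]; ring

/-! ### Parametrization of level sets -/

def phic (c : ℝ) (y : ℝ) : ℂ :=
  Complex.ofReal (c*(1+y^2)/(1+Real.sqrt (1-c^2*(1+y^2)))) + (y:ℂ)*Complex.I

lemma phic_re (c y : ℝ) : (phic c y).re = c*(1+y^2)/(1+Real.sqrt (1-c^2*(1+y^2))) := by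
  simp only [phic, Complex.add_re, Complex.ofReal_re, Complex.mul_re, Complex.I_re,
    Complex.I_im, Complex.ofReal_im, mul_zero, mul_one, zero_sub, neg_zero, add_zero, sub_zero]
lemma phic_im (c y : ℝ) : (phic c y).im = y := by
  simp only [phic, Complex.add_im, Complex.ofReal_im, Complex.mul_im, Complex.I_re,
    Complex.I_im, Complex.ofReal_re, mul_zero, mul_one, zero_add, zero_mul, add_zero]

lemma param_forward {c : ℝ} (hc : c^2 < 1) {y : ℝ} (hy : y^2 < 1-c^2) :
    ‖phic c y‖ < 1 ∧ 2*(phic c y).re = c*(1 + Complex.normSq (phic c y)) := by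
  set D := 1 - c^2*(1+y^2) with hD
  set s := Real.sqrt D with hsdef
  have hDy : y^4 < D := by nlinarith [sq_nonneg y]
  have hDpos : 0 < D := lt_of_le_of_lt (by positivity) hDy
  have hs0 : 0 ≤ s := Real.sqrt_nonneg _
  have hs2 : s^2 = D := Real.sq_sqrt (le_of_lt hDpos)
  have hsy : y^2 < s := by nlinarith [hs2, hDy, sq_nonneg (s - y^2), sq_nonneg (s + y^2)]
  have h1s : 0 < 1 + s := by linarith
  set x := c*(1+y^2)/(1+s) with hxdef
  have hx1 : x*(1+s) = c*(1+y^2) := by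
    rw [hxdef]; field_simp
  have hx2 : x^2*(1+s)^2 = (1-s^2)*(1+y^2) := by
    have : (x*(1+s))^2 = (c*(1+y^2))^2 := by rw [hx1]
    nlinarith [this, hs2]
  have hre : (phic c y).re = x := phic_re c y
  have him : (phic c y).im = y := phic_im c y
  have hnorm : Complex.normSq (phic c y) = x^2 + y^2 := by
    rw [Complex.normSq_apply, hre, him]; ring
  have hdisk : x^2 + y^2 < 1 := by nlinarith [hx2, hsy, h1s, sq_nonneg (1+s)]
  constructor
  · have : (phic c y).re^2 + (phic c y).im^2 < 1 := by rw [hre, him]; exact hdisk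
    nlinarith [norm_nonneg (phic c y), Complex.sq_norm (phic c y),
      Complex.normSq_apply (phic c y)]
  · rw [hre, hnorm]
    have key : (2*x - c*(1+x^2+y^2))*(1+s)^2 = 0 := by
      linear_combination (2*(1+s) - c*(x*(1+s)+c*(1+y^2)))*hx1 - c*(1+y^2)*hs2
    have h2 : (1+s)^2 ≠ 0 := by positivity
    have := (mul_eq_zero.1 key).resolve_right h2
    linarith

lemma param_backward {c : ℝ} (hc : c^2 < 1) {z : ℂ} (hz : ‖z‖ < 1)
    (heq : 2*z.re = c*(1 + Complex.normSq z)) :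
    z.im^2 < 1 - c^2 ∧ phic c z.im = z := by
  set x := z.re with hxd
  set y := z.im with hyd
  have hdisk : x^2 + y^2 < 1 := by
    nlinarith [norm_nonneg z, Complex.sq_norm z, Complex.normSq_apply z, hz]
  have hnorm : Complex.normSq z = x^2 + y^2 := by rw [Complex.normSq_apply]; ring
  rw [hnorm] at heq
  have hx1 : x^2 < 1 := by nlinarith [sq_nonneg y]
  have key : (1-c^2-y^2)*(1+x^2+y^2)^2
      = (1-x^2-y^2)*(y^4+(2+x^2)*y^2+(1-x^2)) := by
    linear_combination (c*(1+x^2+y^2)+2*x)*heq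
  have hy : y^2 < 1 - c^2 := by
    nlinarith [key, mul_pos (by nlinarith : (0:ℝ) < 1-x^2-y^2)
      (by nlinarith [sq_nonneg y, sq_nonneg (y^2)] : (0:ℝ) < y^4+(2+x^2)*y^2+(1-x^2)),
      sq_nonneg (1+x^2+y^2)]
  refine ⟨hy, ?_⟩
  have hcx : c*x < 1 := by nlinarith [sq_nonneg (c-x), sq_nonneg (c+x)]
  have hsqeq : 1 - c^2*(1+y^2) = (1-c*x)^2 := by linear_combination c*heq
  have hs : Real.sqrt (1-c^2*(1+y^2)) = 1 - c*x := by
    rw [hsqeq]; exact Real.sqrt_sq (by linarith)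
  apply Complex.ext
  · rw [phic_re, hs]
    rw [div_eq_iff (by linarith : (1:ℝ) + (1-c*x) ≠ 0)]
    linear_combination -heq
  · rw [phic_im]

/-! ### Continuity -/

lemma fS_im_contOn : ContinuousOn (fun z => (fS z).im) 𝔻 := by
  have h1 : ContinuousOn (fun z : ℂ => ‖(I-z)/(I+z)‖) 𝔻 := by
    apply continuous_norm.comp_continuousOn
    exact ContinuousOn.div ((continuous_const.sub continuous_id).continuousOn)
      ((continuous_const.add continuous_id).continuousOn) (fun z hz => I_add_ne' hz)
  have h2 : ContinuousOn (fun z : ℂ => Real.log (‖(I-z)/(I+z)‖)) 𝔻 := by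
    apply Real.continuousOn_log.comp h1
    intro z hz
    simp only [mem_compl_iff, mem_singleton_iff]
    exact norm_ne_zero_iff.mpr (div_ne_zero (I_sub_ne' hz) (I_add_ne' hz))
  exact ContinuousOn.congr (continuousOn_const.mul h2) (fun z _ => fS_im' z)

lemma phic_cont (c : ℝ) : Continuous (phic c) := by
  apply Continuous.add
  · apply Complex.continuous_ofReal.comp
    apply Continuous.div (by continuity)
    · exact continuous_const.add (Real.continuous_sqrt.comp (by continuity))
    · intro y
      have := Real.sqrt_nonneg (1-c^2*(1+y^2))
      positivity
  · exact (Complex.continuous_ofReal).mul continuous_const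

/-! ### Convexity in the imaginary direction -/

lemma convexImDir_fS : ConvexImDir (fS '' 𝔻) := by
  intro a
  set u := a.re with hu
  set E := Real.exp (4*u) with hE
  set c := (E-1)/(E+1) with hcdef
  have hEpos : 0 < E := Real.exp_pos _
  have hc : c^2 < 1 := by
    have h1 : c^2 = (E-1)^2/(E+1)^2 := by rw [hcdef, div_pow]
    rw [h1, div_lt_one (by positivity)]
    nlinarith
  have hcsq : 0 ≤ 1 - c^2 := by linarith
  set r := Real.sqrt (1-c^2) with hr
  have hr2 : r^2 = 1-c^2 := Real.sq_sqrt hcsq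
  have hr0 : 0 ≤ r := Real.sqrt_nonneg _
  have hJ : ∀ y : ℝ, y ∈ Ioo (-r) r ↔ y^2 < 1-c^2 := by
    intro y
    constructor
    · rintro ⟨hy1, hy2⟩; nlinarith
    · intro hy
      constructor
      · nlinarith
      · nlinarith
  have hset : {t : ℝ | a + (t:ℂ)*I ∈ fS '' 𝔻}
      = (fun y => (fS (phic c y)).im - a.im) '' (Ioo (-r) r) := by
    ext t
    simp only [mem_setOf_eq, mem_image]
    constructor
    · rintro ⟨z, hz, hfz⟩
      have hz' : ‖z‖ < 1 := hz
      have hre : (fS z).re = u := by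
        rw [hfz]
        simp [Complex.add_re, Complex.mul_re, Complex.ofReal_re, Complex.ofReal_im,
          Complex.I_re, Complex.I_im, hu]
      have hlev := (level_iff' u z hz').1 hre
      obtain ⟨hy, hphi⟩ := param_backward hc hz' hlev
      refine ⟨z.im, (hJ _).2 hy, ?_⟩
      rw [hphi, hfz]
      simp [Complex.add_im, Complex.mul_im, Complex.ofReal_re, Complex.ofReal_im,
        Complex.I_re, Complex.I_im]
    · rintro ⟨y, hyJ, rfl⟩
      obtain ⟨hzd, hlev⟩ := param_forward hc ((hJ y).1 hyJ)
      refine ⟨phic c y, hzd, ?_⟩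
      have hre : (fS (phic c y)).re = u := (level_iff' u _ hzd).2 hlev
      apply Complex.ext
      · simp [Complex.add_re, Complex.mul_re, Complex.ofReal_re, Complex.ofReal_im,
          Complex.I_re, Complex.I_im, hre, hu]
      · simp [Complex.add_im, Complex.mul_im, Complex.ofReal_re, Complex.ofReal_im,
          Complex.I_re, Complex.I_im]
  have hcont : ContinuousOn (fun y => (fS (phic c y)).im - a.im) (Ioo (-r) r) := by
    apply ContinuousOn.sub _ continuousOn_const
    apply ContinuousOn.comp fS_im_contOn ((phic_cont c).continuousOn)
    intro y hy
    exact (param_forward hc ((hJ y).1 hy)).1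
  have hpre : IsPreconnected ((fun y => (fS (phic c y)).im - a.im) '' (Ioo (-r) r)) :=
    (isPreconnected_Ioo).image _ hcont
  rw [hset]
  exact hpre.ordConnected

/-- The harmonic Scherk mapping is injective on `𝔻` and its image is convex in the direction of
the imaginary axis. -/
theorem stmt8 : Set.InjOn fS 𝔻 ∧ ConvexImDir (fS '' 𝔻) :=
  ⟨fS_injOn', convexImDir_fS⟩

end
end
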